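/- arXiv:0809.1552 — 2 statements merged into one kernel-verified Lean document; each statement's English description precedes it below -/
import Mathlib

section
/- (Split–Split, left) For every type X, every step function f : S X and rationals a, b, c strictly between 0 and 1, if a·b = c then splitL (splitL f a) b ≍ splitL f c, where ≍ is the lifted equality relation on S X. -/
set_option linter.unusedVariables false

/-- Rationals strictly between 0 and 1. -/
abbrev OO : Type := {q : ℚ // 0 < q ∧ q < 1}

/-- Rational step functions on the unit interval with values in `X`. -/
inductive S (X : Type) : Type
  | const : X → S X
  | glue : OO → S X → S X → S X

namespace S

def divO (a o : OO) (h : a.1 < o.1) : OO :=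
  ⟨a.1 / o.1, div_pos a.2.1 o.2.1, (div_lt_one o.2.1).2 h⟩

def subO (a o : OO) (h : o.1 < a.1) : OO :=
  ⟨(a.1 - o.1) / (1 - o.1),
    div_pos (by linarith) (by linarith [o.2.2]),
    (div_lt_one (by linarith [o.2.2])).2 (by linarith [a.2.2])⟩

/-- Left split: the part of the step function on `[0,a]`, rescaled to `[0,1]`. -/
def splitL {X : Type} : S X → OO → S X
  | const x, _ => const x
  | glue o f g, a =>
      if h : a.1 < o.1 then splitL f (divO a o h)
      else if h' : o.1 < a.1 then glue (divO o a h') f (splitL g (subO a o h'))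
      else f

/-- Right split: the part of the step function on `[a,1]`, rescaled to `[0,1]`. -/
def splitR {X : Type} : S X → OO → S X
  | const x, _ => const x
  | glue o f g, a =>
      if h : a.1 < o.1 then glue (subO o a h) (splitR f (divO a o h)) g
      else if h' : o.1 < a.1 then splitR g (subO a o h')
      else g

/-- The catamorphism (fold) for step functions. -/
def fold {X Y : Type} (φ : X → Y) (ψ : OO → Y → Y → Y) : S X → Y
  | const x => φ x
  | glue o f g => ψ o (fold φ ψ f) (fold φ ψ g)

/-- `map` for step functions. -/
def mapS {X Y : Type} (f : X → Y) : S X → S Y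
  | const x => const (f x)
  | glue o l r => glue o (mapS f l) (mapS f r)

/-- The applicative `ap` (pointwise application) for step functions. -/
def ap {X Y : Type} : S (X → Y) → S X → S Y
  | const f, x => mapS f x
  | glue o fl fr, x => glue o (ap fl (splitL x o)) (ap fr (splitR x o))

/-- Binary map. -/
def map2 {X Y Z : Type} (f : X → Y → Z) (a : S X) (b : S Y) : S Z :=
  ap (mapS f a) b

/-- `fold⋆`: a step function of propositions holds everywhere. -/
def foldStar : S Prop → Prop := fold id (fun _ p q => p ∧ q)

/-- Lifting of a relation to step functions: it holds pointwise everywhere. -/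
def liftRel {X Y : Type} (R : X → Y → Prop) (f : S X) (g : S Y) : Prop :=
  foldStar (map2 R f g)

/-- The equivalence `≍` on step functions: the lifting of equality. -/
def equivS {X : Type} (f g : S X) : Prop := liftRel Eq f g

def foldSup : S ℚ → ℚ := fold id (fun _ x y => max x y)

def foldAffine : S ℚ → ℚ := fold id (fun o x y => o.1 * x + (1 - o.1) * y)

def normInf (f : S ℚ) : ℚ := foldSup (mapS (fun q => |q|) f)

def normOne (f : S ℚ) : ℚ := foldAffine (mapS (fun q => |q|) f)

def dInf (f g : S ℚ) : ℚ := normInf (map2 (· - ·) f g)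

def dOne (f g : S ℚ) : ℚ := normOne (map2 (· - ·) f g)

end S

open S

lemma splitL_glue_self {X : Type} (o : OO) (f g : S X) : splitL (glue o f g) o = f := by
  simp [splitL]

lemma splitR_glue_self {X : Type} (o : OO) (f g : S X) : splitR (glue o f g) o = g := by
  simp [splitR]

lemma equivS_refl {X : Type} (f : S X) : equivS f f := by
  induction f with
  | const x => exact rfl
  | glue o l r ihl ihr =>
      show foldStar (map2 Eq (glue o l r) (glue o l r))
      simp only [map2, mapS, ap, splitL_glue_self, splitR_glue_self, foldStar, fold]
      exact ⟨ihl, ihr⟩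

lemma equivS_of_eq {X : Type} {f g : S X} (h : f = g) : equivS f g := h ▸ equivS_refl f

lemma equivS_glue {X : Type} (o : OO) {x y x' y' : S X} (h1 : equivS x x')
    (h2 : equivS y y') : equivS (glue o x y) (glue o x' y') := by
  show foldStar (map2 Eq (glue o x y) (glue o x' y'))
  simp only [map2, mapS, ap, splitL_glue_self, splitR_glue_self, foldStar, fold]
  exact ⟨h1, h2⟩

/-- Split–Split, left: if `a·b = c` then `splitL (splitL f a) b ≍ splitL f c`. -/
theorem splitL_splitL_equiv {X : Type} (f : S X) (a b c : OO)
    (h : a.1 * b.1 = c.1) :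
    equivS (splitL (splitL f a) b) (splitL f c) := by
  induction f generalizing a b c with
  | const x => exact equivS_refl _
  | glue o f g ihf ihg =>
    have hca : c.1 < a.1 := by nlinarith [a.2.1, a.2.2, b.2.1, b.2.2]
    rcases lt_trichotomy a.1 o.1 with hlt | heq | hgt
    · have hc : c.1 < o.1 := lt_trans hca hlt
      rw [show splitL (glue o f g) a = splitL f (divO a o hlt) by simp [splitL, hlt],
          show splitL (glue o f g) c = splitL f (divO c o hc) by simp [splitL, hc]]
      exact ihf _ _ _ (by
        show a.1 / o.1 * b.1 = c.1 / o.1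
        rw [div_mul_eq_mul_div, h])
    · have hc : c.1 < o.1 := heq ▸ hca
      rw [show splitL (glue o f g) a = f by
            simp [splitL, heq, lt_irrefl, not_lt_of_gt],
          show splitL (glue o f g) c = splitL f (divO c o hc) by simp [splitL, hc]]
      apply equivS_of_eq
      congr 1
      exact Subtype.ext (by
        show b.1 = c.1 / o.1
        rw [← h, ← heq]
        exact (mul_div_cancel_left₀ b.1 (ne_of_gt a.2.1)).symm)
    · rw [show splitL (glue o f g) a
            = glue (divO o a hgt) f (splitL g (subO a o hgt)) by simp [splitL, hgt, not_lt_of_gt hgt]]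
      rcases lt_trichotomy c.1 o.1 with hc | hc | hc
      · have hb : b.1 < (divO o a hgt).1 := by
          show b.1 < o.1 / a.1
          rw [lt_div_iff₀ a.2.1]
          nlinarith
        rw [show splitL (glue (divO o a hgt) f (splitL g (subO a o hgt))) b
              = splitL f (divO b (divO o a hgt) hb) by simp [splitL, hb],
            show splitL (glue o f g) c = splitL f (divO c o hc) by simp [splitL, hc]]
        apply equivS_of_eq
        congr 1
        exact Subtype.ext (by
          show b.1 / (o.1 / a.1) = c.1 / o.1
          rw [← h]
          field_simp)
      · have hb : b.1 = (divO o a hgt).1 := by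
          show b.1 = o.1 / a.1
          rw [eq_div_iff (ne_of_gt a.2.1)]
          nlinarith
        rw [show splitL (glue (divO o a hgt) f (splitL g (subO a o hgt))) b = f by
              simp [splitL, hb, lt_irrefl],
            show splitL (glue o f g) c = f by
              simp [splitL, hc, lt_irrefl, not_lt_of_gt]]
        exact equivS_refl f
      · have hb : (divO o a hgt).1 < b.1 := by
          show o.1 / a.1 < b.1
          rw [div_lt_iff₀ a.2.1]
          nlinarith
        rw [show splitL (glue (divO o a hgt) f (splitL g (subO a o hgt))) b
              = glue (divO (divO o a hgt) b hb) f
                  (splitL (splitL g (subO a o hgt)) (subO b (divO o a hgt) hb)) by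
              simp [splitL, hb, not_lt_of_gt hb],
            show splitL (glue o f g) c
              = glue (divO o c hc) f (splitL g (subO c o hc)) by
              simp [splitL, hc, not_lt_of_gt hc]]
        have hgl : divO (divO o a hgt) b hb = divO o c hc := Subtype.ext (by
          show o.1 / a.1 / b.1 = o.1 / c.1
          rw [← h]
          field_simp)
        rw [hgl]
        refine equivS_glue _ (equivS_refl f) (ihg _ _ _ ?_)
        show (a.1 - o.1) / (1 - o.1) * ((b.1 - (divO o a hgt).1) / (1 - (divO o a hgt).1))
            = (c.1 - o.1) / (1 - o.1)
        have ha0 : a.1 ≠ 0 := ne_of_gt a.2.1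
        have h1o : (1:ℚ) - o.1 ≠ 0 := by have := o.2.2; intro hh; linarith
        have hao : a.1 - o.1 ≠ 0 := sub_ne_zero.2 (ne_of_gt hgt)
        have hoa : (1:ℚ) - o.1 / a.1 ≠ 0 := by
          have : o.1 / a.1 < 1 := (div_lt_one a.2.1).2 hgt
          linarith
        show (a.1 - o.1) / (1 - o.1) * ((b.1 - o.1 / a.1) / (1 - o.1 / a.1))
            = (c.1 - o.1) / (1 - o.1)
        rw [← h]
        field_simp
end

section
/- (Combinators are preserved) For all types X, Y, Z, the combinators C, K and W are preserved by the step-function applicative functor up to the equivalence ≍: for all f : S (X → Y → Z), x : S X, y : S Y, g : S (X → X → Y): (C) const (fun h a b => h b a) @ f @ y' @ x' ≍ f @ x' @ y' for all x' : S X, y' : S Y; (K) const (fun a b => a) @ x @ y ≍ x after application, i.e. map (fun a b => a) x @ y ≍ x; (W) const (fun h a => h a a) @ g @ x ≍ g @ x @ x; in each case ≍ is the lifted equality relation on step functions of the appropriate value type. -/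
set_option linter.unusedVariables false

open S

namespace S

/-- Evaluation of a step function at a rational (meaningful on `(0,1]`). -/
def eval {X : Type} : S X → ℚ → X
  | const x, _ => x
  | glue o l r, q => if q ≤ o.1 then eval l (q / o.1) else eval r ((q - o.1) / (1 - o.1))

lemma eval_mapS {X Y : Type} (f : X → Y) (x : S X) (q : ℚ) :
    eval (mapS f x) q = f (eval x q) := by
  induction x generalizing q with
  | const a => rfl
  | glue o l r ihl ihr =>
    simp only [mapS, eval]
    split_ifs
    · exact ihl _
    · exact ihr _

lemma eval_splitL {X : Type} (x : S X) (a : OO) (q : ℚ) (h0 : 0 < q) (h1 : q ≤ 1) :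
    eval (splitL x a) q = eval x (a.1 * q) := by
  induction x generalizing a q with
  | const => rfl
  | glue o l r ihl ihr =>
    have ho0 := o.2.1; have ho1 := o.2.2; have ha0 := a.2.1; have ha1 := a.2.2
    rcases lt_trichotomy a.1 o.1 with h | h | h
    · rw [splitL, dif_pos h, ihl _ _ h0 h1]
      have hle : a.1 * q ≤ o.1 := by nlinarith
      simp only [eval, if_pos hle, divO]
      congr 1
      field_simp
    · rw [splitL, dif_neg (by simp [h]), dif_neg (by simp [h])]
      have hle : a.1 * q ≤ o.1 := by nlinarith
      simp only [eval, if_pos hle]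
      congr 1
      rw [h]
      field_simp
    · rw [splitL, dif_neg (not_lt.2 h.le), dif_pos h]
      simp only [eval, divO]
      have hiff : q ≤ o.1 / a.1 ↔ a.1 * q ≤ o.1 := by
        rw [le_div_iff₀ ha0]; constructor <;> intro <;> linarith [mul_comm q a.1]
      by_cases hc : a.1 * q ≤ o.1
      · erw [if_pos (hiff.2 hc), if_pos hc]
        congr 1
        field_simp
      · erw [if_neg (fun hh => hc (hiff.1 hh)), if_neg hc]
        have hlt : o.1 / a.1 < q := not_le.1 (fun hh => hc (hiff.1 hh))
        have hd0 : (0:ℚ) < 1 - o.1 / a.1 := by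
          have : o.1 / a.1 < 1 := (div_lt_one ha0).2 h
          linarith
        have hq0' : 0 < (q - o.1 / a.1) / (1 - o.1 / a.1) := div_pos (by linarith) hd0
        have hq1' : (q - o.1 / a.1) / (1 - o.1 / a.1) ≤ 1 := by
          rw [div_le_one hd0]; linarith
        rw [ihr _ _ hq0' hq1']
        congr 1
        simp only [subO]
        have hao : a.1 - o.1 ≠ 0 := by linarith
        have h1o : (1:ℚ) - o.1 ≠ 0 := by linarith
        field_simp

lemma eval_splitR {X : Type} (x : S X) (a : OO) (q : ℚ) (h0 : 0 < q) (h1 : q ≤ 1) :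
    eval (splitR x a) q = eval x (a.1 + q * (1 - a.1)) := by
  induction x generalizing a q with
  | const => rfl
  | glue o l r ihl ihr =>
    have ho0 := o.2.1; have ho1 := o.2.2; have ha0 := a.2.1; have ha1 := a.2.2
    rcases lt_trichotomy a.1 o.1 with h | h | h
    · rw [splitR, dif_pos h]
      simp only [eval, subO, divO]
      have hd0 : (0:ℚ) < (o.1 - a.1) / (1 - a.1) := div_pos (by linarith) (by linarith)
      have hiff : q ≤ (o.1 - a.1) / (1 - a.1) ↔ a.1 + q * (1 - a.1) ≤ o.1 := by
        rw [le_div_iff₀ (by linarith : (0:ℚ) < 1 - a.1)]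
        constructor <;> intro <;> linarith
      by_cases hc : a.1 + q * (1 - a.1) ≤ o.1
      · erw [if_pos (hiff.2 hc), if_pos hc]
        have hq0' : 0 < q / ((o.1 - a.1) / (1 - a.1)) := div_pos h0 hd0
        have hq1' : q / ((o.1 - a.1) / (1 - a.1)) ≤ 1 := by
          rw [div_le_one hd0]; exact hiff.2 hc
        rw [ihl _ _ hq0' hq1']
        congr 1
        have hoa : o.1 - a.1 ≠ 0 := by linarith
        have h1a : (1:ℚ) - a.1 ≠ 0 := by linarith
        field_simp
      · erw [if_neg (fun hh => hc (hiff.1 hh)), if_neg hc]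
        congr 1
        have hoa : o.1 - a.1 ≠ 0 := by linarith
        have h1a : (1:ℚ) - a.1 ≠ 0 := by linarith
        have h1o : (1:ℚ) - o.1 ≠ 0 := by linarith
        have key : 1 - (o.1 - a.1) / (1 - a.1) = (1 - o.1) / (1 - a.1) := by
          field_simp
          ring
        rw [key, div_eq_div_iff (div_ne_zero h1o h1a) h1o]
        field_simp
        ring
    · rw [splitR, dif_neg (by simp [h]), dif_neg (by simp [h])]
      have hgt : ¬ a.1 + q * (1 - a.1) ≤ o.1 := by nlinarith
      simp only [eval, if_neg hgt]
      congr 1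
      rw [h]
      have h1o : (1:ℚ) - o.1 ≠ 0 := by linarith
      field_simp
      ring
    · rw [splitR, dif_neg (not_lt.2 h.le), dif_pos h, ihr _ _ h0 h1]
      have hgt : ¬ a.1 + q * (1 - a.1) ≤ o.1 := by nlinarith
      simp only [eval, if_neg hgt, subO]
      congr 1
      have h1o : (1:ℚ) - o.1 ≠ 0 := by linarith
      field_simp
      ring

lemma eval_ap {X Y : Type} (f : S (X → Y)) (x : S X) (q : ℚ) (h0 : 0 < q) (h1 : q ≤ 1) :
    eval (ap f x) q = eval f q (eval x q) := by
  induction f generalizing x q with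
  | const f => exact eval_mapS f x q
  | glue o fl fr ihl ihr =>
    have ho0 := o.2.1; have ho1 := o.2.2
    simp only [ap, eval]
    by_cases hc : q ≤ o.1
    · simp only [if_pos hc]
      have hq0' : 0 < q / o.1 := div_pos h0 ho0
      have hq1' : q / o.1 ≤ 1 := by rw [div_le_one ho0]; exact hc
      rw [ihl _ _ hq0' hq1', eval_splitL x o _ hq0' hq1']
      congr 2
      field_simp
    · simp only [if_neg hc]
      push_neg at hc
      have hq0' : 0 < (q - o.1) / (1 - o.1) := div_pos (by linarith) (by linarith)
      have hq1' : (q - o.1) / (1 - o.1) ≤ 1 := by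
        rw [div_le_one (by linarith)]; linarith
      rw [ihr _ _ hq0' hq1', eval_splitR x o _ hq0' hq1']
      congr 2
      have h1o : (1:ℚ) - o.1 ≠ 0 := by linarith
      field_simp
      ring_nf

lemma foldStar_of_eval (p : S Prop) (h : ∀ q : ℚ, 0 < q → q ≤ 1 → eval p q) :
    foldStar p := by
  induction p with
  | const P => exact h 1 one_pos le_rfl
  | glue o l r ihl ihr =>
    have ho0 := o.2.1; have ho1 := o.2.2
    refine ⟨ihl fun q h0 h1 => ?_, ihr fun q h0 h1 => ?_⟩
    · have := h (q * o.1) (by positivity) (by nlinarith)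
      simpa only [eval, if_pos (by nlinarith : q * o.1 ≤ o.1),
        mul_div_cancel_right₀ q ho0.ne'] using this
    · have hgt : ¬ o.1 + q * (1 - o.1) ≤ o.1 := by nlinarith
      have := h (o.1 + q * (1 - o.1)) (by nlinarith) (by nlinarith)
      have harg : (o.1 + q * (1 - o.1) - o.1) / (1 - o.1) = q := by
        rw [add_sub_cancel_left, mul_div_cancel_right₀ _ (by linarith : (1:ℚ) - o.1 ≠ 0)]
      simpa only [eval, if_neg hgt, harg] using this

lemma equivS_of_eval {X : Type} (f g : S X)
    (h : ∀ q : ℚ, 0 < q → q ≤ 1 → eval f q = eval g q) : equivS f g := by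
  apply foldStar_of_eval
  intro q h0 h1
  show eval (ap (mapS Eq f) g) q
  rw [eval_ap _ _ _ h0 h1, eval_mapS]
  exact h q h0 h1

end S

/-- The combinators C, K and W are preserved by the step-function applicative
functor, up to the lifted equality. -/
theorem step_combinator_laws {X Y Z : Type} (f : S (X → Y → Z)) (x : S X) (y : S Y)
    (g : S (X → X → Y)) :
    (∀ (x' : S X) (y' : S Y),
      equivS
        (ap (ap (ap (S.const (fun (h : X → Y → Z) (b : Y) (a : X) => h a b)) f) y') x')
        (ap (ap f x') y')) ∧
    equivS (ap (mapS (fun (a : X) (_ : Y) => a) x) y) x ∧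
    equivS (ap (ap (S.const (fun (h : X → X → Y) (a : X) => h a a)) g) x)
      (ap (ap g x) x) := by
  refine ⟨fun x' y' => ?_, ?_, ?_⟩ <;>
    apply equivS_of_eval <;> intro q h0 h1 <;>
    simp only [eval_ap _ _ _ h0 h1, eval_mapS, eval]
end
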